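/- Let (Ω, 𝓕) be a measurable space and let P*, Q, V be probability measures on Ω that are mutually absolutely continuous (P* ≪ V, V ≪ P*, Q ≪ V, V ≪ Q). Assume the log-likelihood ratio llr P* Q is square-integrable with respect to V. Then the log-variance divergence vanishes if and only if the measures coincide: Var_V[llr P* Q] := ∫ (llr P* Q − ∫ llr P* Q dV)² dV = 0 if and only if P* = Q. -/

import Mathlib

open MeasureTheory Real

/-- Optimality guarantee of the log-variance divergence (Section 4.2): for mutually
absolutely continuous probability measures, `Var_V[log(dP*/dQ)] = 0` iff `P* = Q`. -/
theorem stmt_13 {Ω : Type*} [MeasurableSpace Ω] (Pstar Q V : Measure Ω)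
    [IsProbabilityMeasure Pstar] [IsProbabilityMeasure Q] [IsProbabilityMeasure V]
    (h1 : Pstar ≪ V) (h2 : V ≪ Pstar) (h3 : Q ≪ V) (h4 : V ≪ Q)
    (hsq : MemLp (llr Pstar Q) 2 V) :
    ∫ x, (llr Pstar Q x - ∫ y, llr Pstar Q y ∂V) ^ 2 ∂V = 0 ↔ Pstar = Q := by
  set c := ∫ y, llr Pstar Q y ∂V with hc
  have hPQ : Pstar ≪ Q := h1.trans h4
  have hQP : Q ≪ Pstar := h3.trans h2
  constructor
  · intro h0
    have hint : Integrable (fun x ↦ (llr Pstar Q x - c) ^ 2) V :=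
      (hsq.sub (memLp_const c)).integrable_sq
    have hzero : (fun x ↦ (llr Pstar Q x - c) ^ 2) =ᵐ[V] 0 := by
      rw [← integral_eq_zero_iff_of_nonneg_ae
        (Filter.Eventually.of_forall fun x ↦ sq_nonneg _) hint]
      exact h0
    have hconst : (fun x ↦ llr Pstar Q x) =ᵐ[V] fun _ ↦ c := by
      filter_upwards [hzero] with x hx
      have := pow_eq_zero_iff (n := 2) (by norm_num) |>.mp hx
      linarith [sub_eq_zero.mp this]
    have hconstQ : (fun x ↦ llr Pstar Q x) =ᵐ[Q] fun _ ↦ c := h3.ae_le hconst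
    have hexp : (fun x ↦ exp (llr Pstar Q x)) =ᵐ[Q] fun x ↦ (Pstar.rnDeriv Q x).toReal :=
      exp_llr_of_ac' Pstar Q hQP
    have hint1 : ∫ x, (Pstar.rnDeriv Q x).toReal ∂Q = 1 := by
      rw [Measure.integral_toReal_rnDeriv hPQ]
      simp
    have hec : ∫ x, (Pstar.rnDeriv Q x).toReal ∂Q = exp c := by
      rw [integral_congr_ae hexp.symm,
        integral_congr_ae (show (fun x ↦ exp (llr Pstar Q x)) =ᵐ[Q] fun _ ↦ exp c from
          hconstQ.mono fun x hx ↦ by simp only [hx])]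
      simp
    have hc0 : c = 0 := by
      have : exp c = 1 := by rw [← hec, hint1]
      simpa [exp_eq_one_iff] using this
    have hrn : Pstar.rnDeriv Q =ᵐ[Q] 1 := by
      filter_upwards [hexp, hconstQ] with x hx hx'
      have : (Pstar.rnDeriv Q x).toReal = 1 := by
        rw [← hx, hx', hc0, exp_zero]
      exact (ENNReal.toReal_eq_one_iff _).mp this
    exact (Measure.rnDeriv_eq_one_iff_eq hPQ).mp hrn
  · intro h
    subst h
    have hllr : llr Pstar Pstar =ᵐ[V] 0 := by
      filter_upwards [h2.ae_le (Measure.rnDeriv_self Pstar)] with x hx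
      simp [llr, hx]
    have hc0 : c = 0 := by
      rw [hc, integral_congr_ae hllr]; simp
    have : (fun x ↦ (llr Pstar Pstar x - c) ^ 2) =ᵐ[V] 0 := by
      filter_upwards [hllr] with x hx
      simp [hx, hc0]
    rw [integral_congr_ae this]; simp
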